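/- Koenigs nets are Moutard nets in homogeneous coordinates (Theorem 'Koenigs nets = Moutard nets in homogeneous coordinates', smooth case): Let N ≥ 1, let f: ℝ² → ℝᴺ and ν: ℝ² → ℝ be twice continuously differentiable with ν nowhere zero, and define y: ℝ² → ℝᴺ × ℝ by y = ν⁻¹·(f, 1) and q: ℝ² → ℝ by q = ν·∂₁∂₂(ν⁻¹). Then f satisfies the Koenigs equation ∂₁∂₂f = (∂₂ν/ν)∂₁f + (∂₁ν/ν)∂₂f everywhere on ℝ² if and only if y satisfies the Moutard equation ∂₁∂₂y = q·y everywhere on ℝ². -/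

import Mathlib

/-- Partial derivative in the first coordinate direction of `ℝ²`. -/
noncomputable def pd1 {E : Type*} [NormedAddCommGroup E] [NormedSpace ℝ E]
    (g : ℝ × ℝ → E) (u : ℝ × ℝ) : E :=
  fderiv ℝ g u (1, 0)

/-- Partial derivative in the second coordinate direction of `ℝ²`. -/
noncomputable def pd2 {E : Type*} [NormedAddCommGroup E] [NormedSpace ℝ E]
    (g : ℝ × ℝ → E) (u : ℝ × ℝ) : E :=
  fderiv ℝ g u (0, 1)

lemma helper_smul {E : Type*} [NormedAddCommGroup E] [NormedSpace ℝ E]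
    {c : ℝ × ℝ → ℝ} {g : ℝ × ℝ → E} {u : ℝ × ℝ} (w : ℝ × ℝ)
    (hc : DifferentiableAt ℝ c u) (hg : DifferentiableAt ℝ g u) :
    fderiv ℝ (fun v => c v • g v) u w = fderiv ℝ c u w • g u + c u • fderiv ℝ g u w := by
  rw [fderiv_fun_smul hc hg]
  simp [ContinuousLinearMap.add_apply]
  abel

lemma helper_prod {E F : Type*} [NormedAddCommGroup E] [NormedSpace ℝ E]
    [NormedAddCommGroup F] [NormedSpace ℝ F]
    {g₁ : ℝ × ℝ → E} {g₂ : ℝ × ℝ → F} {u : ℝ × ℝ} (w : ℝ × ℝ)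
    (h₁ : DifferentiableAt ℝ g₁ u) (h₂ : DifferentiableAt ℝ g₂ u) :
    fderiv ℝ (fun v => (g₁ v, g₂ v)) u w = (fderiv ℝ g₁ u w, fderiv ℝ g₂ u w) := by
  rw [h₁.fderiv_prodMk h₂]; rfl

lemma helper_inv {ν : ℝ × ℝ → ℝ} {u : ℝ × ℝ} (w : ℝ × ℝ)
    (hν : DifferentiableAt ℝ ν u) (h0 : ν u ≠ 0) :
    fderiv ℝ (fun v => (ν v)⁻¹) u w = -((ν u)⁻¹ * (ν u)⁻¹ * fderiv ℝ ν u w) := by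
  have : (fun v => (ν v)⁻¹) = Inv.inv ∘ ν := rfl
  rw [this, fderiv_comp u (differentiableAt_inv h0) hν, fderiv_inv' h0]
  simp [ContinuousLinearMap.comp_apply]
  ring

lemma helper_pdDiff {E : Type*} [NormedAddCommGroup E] [NormedSpace ℝ E]
    {g : ℝ × ℝ → E} (hg : ContDiff ℝ 2 g) (w : ℝ × ℝ) :
    Differentiable ℝ (fun v => fderiv ℝ g v w) :=
  ((hg.fderiv_right (m := 1) (by norm_num)).clm_apply contDiff_const).differentiable one_ne_zero

lemma alg {E : Type*} [AddCommGroup E] [Module ℝ E] (X p1 p2 fu : E) (A μ ν s1 s2 : ℝ)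
    (hμν : ν * μ = 1) :
    (X = (s2 / ν) • p1 + (s1 / ν) • p2) ↔
      (A • fu + ((-(μ * μ * s2)) • p1 + ((-(μ * μ * s1)) • p2 + μ • X)) = A • fu) := by
  have hν0 : ν ≠ 0 := left_ne_zero_of_mul_eq_one hμν
  have hμ : μ = ν⁻¹ := eq_inv_of_mul_eq_one_left (by linarith [mul_comm ν μ])
  subst hμ
  constructor
  · intro h
    rw [h]
    match_scalars <;> field_simp <;> ring
  · intro h
    have hR : (-(ν⁻¹ * ν⁻¹ * s2)) • p1 + ((-(ν⁻¹ * ν⁻¹ * s1)) • p2 + ν⁻¹ • X) = 0 :=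
      add_eq_left.mp h
    have h2 := congrArg (fun z => ν • z) hR
    simp only [smul_add, smul_smul, smul_zero, hμν, one_smul, mul_inv_cancel₀ hν0] at h2
    have h3 : X = (ν * (ν⁻¹ * ν⁻¹ * s2)) • p1 + (ν * (ν⁻¹ * ν⁻¹ * s1)) • p2 := by
      linear_combination (norm := module) h2
    rw [h3]
    match_scalars <;> field_simp <;> ring

/-- Koenigs nets = Moutard nets in homogeneous coordinates (smooth case):
`f` satisfies the Koenigs equation everywhere iff the lift `y = ν⁻¹ (f, 1)`
satisfies the Moutard equation `∂₁∂₂y = q y` with `q = ν ∂₁∂₂(ν⁻¹)`. -/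
theorem koenigs_eq_moutard_smooth {N : ℕ} (hN : 1 ≤ N)
    (f : ℝ × ℝ → EuclideanSpace ℝ (Fin N)) (ν : ℝ × ℝ → ℝ)
    (hf : ContDiff ℝ 2 f) (hν : ContDiff ℝ 2 ν) (hν0 : ∀ u, ν u ≠ 0)
    (y : ℝ × ℝ → EuclideanSpace ℝ (Fin N) × ℝ)
    (hy : ∀ u, y u = ((ν u)⁻¹ • f u, (ν u)⁻¹))
    (q : ℝ × ℝ → ℝ)
    (hq : ∀ u, q u = ν u * pd1 (fun v => pd2 (fun w => (ν w)⁻¹) v) u) :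
    (∀ u, pd1 (fun v => pd2 f v) u =
        (pd2 ν u / ν u) • pd1 f u + (pd1 ν u / ν u) • pd2 f u) ↔
      (∀ u, pd1 (fun v => pd2 y v) u = q u • y u) := by
  set μ : ℝ × ℝ → ℝ := fun w => (ν w)⁻¹ with hμdef
  have hμ : ContDiff ℝ 2 μ := hν.inv hν0
  have hfd : Differentiable ℝ f := hf.differentiable (by norm_num)
  have hνd : Differentiable ℝ ν := hν.differentiable (by norm_num)
  have hμd : Differentiable ℝ μ := hμ.differentiable (by norm_num)
  have hpd2f : Differentiable ℝ (fun v => pd2 f v) := helper_pdDiff hf (0, 1)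
  have hpd2μ : Differentiable ℝ (fun v => pd2 μ v) := helper_pdDiff hμ (0, 1)
  -- Step 1: pd2 of y
  have hy2 : (fun v => pd2 y v) =
      fun v => (pd2 μ v • f v + μ v • pd2 f v, pd2 μ v) := by
    funext v
    have hyf : y = fun v => (μ v • f v, μ v) := funext hy
    show fderiv ℝ y v (0, 1) = _
    rw [hyf, helper_prod (0, 1) ((hμd v).fun_smul (hfd v)) (hμd v),
      helper_smul (0, 1) (hμd v) (hfd v)]
    rfl
  -- Step 2: pd1 of pd2 of y
  have key : ∀ u, pd1 (fun v => pd2 y v) u =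
      (pd1 (fun v => pd2 μ v) u • f u + pd2 μ u • pd1 f u +
        (pd1 μ u • pd2 f u + μ u • pd1 (fun v => pd2 f v) u),
       pd1 (fun v => pd2 μ v) u) := by
    intro u
    show fderiv ℝ (fun v => pd2 y v) u (1, 0) = _
    rw [hy2, helper_prod (1, 0)
        (((hpd2μ u).fun_smul (hfd u)).fun_add ((hμd u).fun_smul (hpd2f u))) (hpd2μ u)]
    have h1 : fderiv ℝ (fun v => pd2 μ v • f v + μ v • pd2 f v) u (1, 0) =
        fderiv ℝ (fun v => pd2 μ v • f v) u (1, 0) +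
          fderiv ℝ (fun v => μ v • pd2 f v) u (1, 0) := by
      rw [fderiv_fun_add ((hpd2μ u).fun_smul (hfd u)) ((hμd u).fun_smul (hpd2f u))]; rfl
    rw [h1, helper_smul (1, 0) (hpd2μ u) (hfd u), helper_smul (1, 0) (hμd u) (hpd2f u)]
    simp only [Prod.mk.injEq]
    constructor
    · show _ = pd1 (fun v => pd2 μ v) u • f u + pd2 μ u • pd1 f u + _
      rfl
    · rfl
  -- Step 3: q u • y u
  have hqy : ∀ u, q u • y u =
      (pd1 (fun v => pd2 μ v) u • f u, pd1 (fun v => pd2 μ v) u) := by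
    intro u
    rw [hy u, hq u]
    have hc : ν u * pd1 (fun v => pd2 (fun w => (ν w)⁻¹) v) u * (ν u)⁻¹ =
        pd1 (fun v => pd2 μ v) u := by
      rw [mul_right_comm, mul_inv_cancel₀ (hν0 u), one_mul]
    simp only [Prod.smul_mk, smul_smul, smul_eq_mul, hc]
    rw [mul_right_comm, mul_inv_cancel₀ (hν0 u), one_mul]
  -- pointwise equivalence
  apply forall_congr'
  intro u
  have hμν : ν u * μ u = 1 := mul_inv_cancel₀ (hν0 u)
  have hp1 : pd1 μ u = -(μ u * μ u * pd1 ν u) := helper_inv (1, 0) (hνd u) (hν0 u)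
  have hp2 : pd2 μ u = -(μ u * μ u * pd2 ν u) := helper_inv (0, 1) (hνd u) (hν0 u)
  rw [key u, hqy u, Prod.mk.injEq, and_iff_left rfl, hp1, hp2]
  have := alg (pd1 (fun v => pd2 f v) u) (pd1 f u) (pd2 f u) (f u)
    (pd1 (fun v => pd2 μ v) u) (μ u) (ν u) (pd1 ν u) (pd2 ν u) hμν
  rw [this]
  constructor <;> intro h <;> [skip; skip] <;> linear_combination (norm := module) h
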